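/- (Rule of Trace-3 Matrices) Let A and B be the z-matrix and w-matrix of a singular sequence. Assume the trace of A equals 3 and a_{ii} = a_{jj} = a_{kk} = 1 for distinct indices i, j, k. If l ∉ {i, j, k} and a_{ij} = a_{ik} = a_{il} = 1, then a_{jl} + a_{kl} ≠ 0. The same statement holds with A replaced by B. -/

import Mathlib

open Filter Finset

/-- `Zq δ z k l` is the quantity `Z_{lk} = δ_{kl}^3 · (z_k − z_l)`
(and, applied to `w`, the quantity `W_{lk}`). -/
noncomputable def Zq {n : ℕ} (δ : Fin n → Fin n → ℂ) (z : Fin n → ℂ) (k l : Fin n) : ℂ :=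
  δ k l ^ 3 * (z k - z l)

/-- A singular sequence of normalized central configurations for the masses `m`:
sequences `z^{(N)}, w^{(N)} ∈ ℂ^n`, symmetric `δ^{(N)}`, and positive reals `ε_N → 0`
such that every term satisfies the central configuration equations
`z_k = ∑_{l≠k} m_l Z_{lk}`, `w_k = ∑_{l≠k} m_l W_{lk}`, the normalization
`δ_{kl}^2 z_{kl} w_{kl} = 1` (`k ≠ l`), the maximum of the `|z_k|, |Z_{kl}|`
(resp. `|w_k|, |W_{kl}|`) equals `ε_N^{-2}`, and all the sequences
`ε_N^2 z_k, ε_N^2 w_k, ε_N^2 Z_{kl}, ε_N^2 W_{kl}` converge. -/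
structure SingularSeq (n : ℕ) (m : Fin n → ℂ) : Type where
  z : ℕ → Fin n → ℂ
  w : ℕ → Fin n → ℂ
  delta : ℕ → Fin n → Fin n → ℂ
  eps : ℕ → ℝ
  eps_pos : ∀ N, 0 < eps N
  eps_lim : Tendsto eps atTop (nhds 0)
  delta_symm : ∀ N, ∀ k l : Fin n, delta N k l = delta N l k
  eq_z : ∀ N, ∀ k : Fin n, z N k = ∑ l ∈ univ.erase k, m l * Zq (delta N) (z N) k l
  eq_w : ∀ N, ∀ k : Fin n, w N k = ∑ l ∈ univ.erase k, m l * Zq (delta N) (w N) k l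
  normalize : ∀ N, ∀ k l : Fin n, k ≠ l →
    delta N k l ^ 2 * (z N l - z N k) * (w N l - w N k) = 1
  maxZ : ∀ N, IsGreatest
      ({x : ℝ | ∃ k, x = ‖z N k‖} ∪
        {x : ℝ | ∃ k l, k ≠ l ∧ x = ‖Zq (delta N) (z N) k l‖})
      (eps N ^ (-2 : ℤ))
  maxW : ∀ N, IsGreatest
      ({x : ℝ | ∃ k, x = ‖w N k‖} ∪
        {x : ℝ | ∃ k l, k ≠ l ∧ x = ‖Zq (delta N) (w N) k l‖})
      (eps N ^ (-2 : ℤ))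
  conv_z : ∀ k : Fin n, ∃ L : ℂ,
    Tendsto (fun N => (eps N : ℂ) ^ 2 * z N k) atTop (nhds L)
  conv_w : ∀ k : Fin n, ∃ L : ℂ,
    Tendsto (fun N => (eps N : ℂ) ^ 2 * w N k) atTop (nhds L)
  conv_Z : ∀ k l : Fin n, k ≠ l → ∃ L : ℂ,
    Tendsto (fun N => (eps N : ℂ) ^ 2 * Zq (delta N) (z N) k l) atTop (nhds L)
  conv_W : ∀ k l : Fin n, k ≠ l → ∃ L : ℂ,
    Tendsto (fun N => (eps N : ℂ) ^ 2 * Zq (delta N) (w N) k l) atTop (nhds L)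

/-- `A` and `B` are the z-matrix and the w-matrix of the singular sequence `S`:
symmetric `{0,1}`-matrices whose entries record which of the (convergent) sequences
`ε_N^2 z_i`, `ε_N^2 Z_{ij}` (resp. `ε_N^2 w_i`, `ε_N^2 W_{ij}`) have nonzero limit. -/
structure IsZWMatrices {n : ℕ} {m : Fin n → ℂ} (S : SingularSeq n m)
    (A B : Matrix (Fin n) (Fin n) ℕ) : Prop where
  zeroOne_A : ∀ i j, A i j = 0 ∨ A i j = 1
  symm_A : ∀ i j, A i j = A j i
  zeroOne_B : ∀ i j, B i j = 0 ∨ B i j = 1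
  symm_B : ∀ i j, B i j = B j i
  diag_A : ∀ i, A i i = 1 ↔
    ¬ Tendsto (fun N => (S.eps N : ℂ) ^ 2 * S.z N i) atTop (nhds 0)
  off_A : ∀ i j, i ≠ j → (A i j = 1 ↔
    ¬ Tendsto (fun N => (S.eps N : ℂ) ^ 2 * Zq (S.delta N) (S.z N) i j) atTop (nhds 0))
  diag_B : ∀ i, B i i = 1 ↔
    ¬ Tendsto (fun N => (S.eps N : ℂ) ^ 2 * S.w N i) atTop (nhds 0)
  off_B : ∀ i j, i ≠ j → (B i j = 1 ↔
    ¬ Tendsto (fun N => (S.eps N : ℂ) ^ 2 * Zq (S.delta N) (S.w N) i j) atTop (nhds 0))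



private lemma cube_le (x : ℝ) (hx : 0 ≤ x) : x ≤ 1 + x ^ 3 := by
  nlinarith [sq_nonneg (x - 1), sq_nonneg (x + 1), sq_nonneg x]

private lemma tendsto_atTop_of_pow3 {b : ℕ → ℝ} (hb0 : ∀ N, 0 ≤ b N)
    (h : Tendsto (fun N => b N ^ 3) atTop atTop) : Tendsto b atTop atTop := by
  rw [tendsto_atTop] at h ⊢
  intro X
  filter_upwards [h ((max X 1) ^ 3)] with N hN
  have hmax : max X 1 ≤ b N := by
    by_contra hc
    push_neg at hc
    have := pow_lt_pow_left₀ hc (hb0 N) (three_ne_zero)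
    linarith
  exact le_trans (le_max_left X 1) hmax

private lemma Zq_self {n : ℕ} (δ : Fin n → Fin n → ℂ) (z : Fin n → ℂ) (p : Fin n) :
    Zq δ z p p = 0 := by simp [Zq]

private lemma Zq_antisymm {n : ℕ} (δ : Fin n → Fin n → ℂ) (hδ : ∀ k l, δ k l = δ l k)
    (z : Fin n → ℂ) (p q : Fin n) : Zq δ z q p = - Zq δ z p q := by
  unfold Zq; rw [hδ q p]; ring

private lemma sum_antisym {α : Type*} (U : Finset α) (f : α → α → ℂ)
    (hf : ∀ p q, f q p = - f p q) : ∑ p ∈ U, ∑ q ∈ U, f p q = 0 := by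
  have h1 : ∑ p ∈ U, ∑ q ∈ U, f p q = ∑ q ∈ U, ∑ p ∈ U, f p q := Finset.sum_comm
  have h2 : ∑ q ∈ U, ∑ p ∈ U, f p q = - ∑ p ∈ U, ∑ q ∈ U, f p q := by
    rw [← Finset.sum_neg_distrib]
    refine Finset.sum_congr rfl fun p _ => ?_
    rw [← Finset.sum_neg_distrib]
    refine Finset.sum_congr rfl fun q _ => ?_
    rw [hf q p, neg_neg]
  have h3 : ∑ p ∈ U, ∑ q ∈ U, f p q = - ∑ p ∈ U, ∑ q ∈ U, f p q := h1.trans h2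
  have h4 : (∑ p ∈ U, ∑ q ∈ U, f p q) + (∑ p ∈ U, ∑ q ∈ U, f p q) = 0 := by
    nth_rewrite 1 [h3]; exact neg_add_cancel _
  exact add_self_eq_zero.mp h4

private lemma abs_tendsto {f : ℕ → ℂ} {L : ℂ} (h : Tendsto f atTop (nhds L)) :
    Tendsto (fun N => ‖f N‖) atTop (nhds (‖L‖)) :=
  (continuous_norm.tendsto L).comp h

private lemma limit_eq_aux (ε : ℕ → ℝ) (hε : ∀ N, 0 < ε N)
    (Zil Zjl Zij vil vjl vij cil cjl cij : ℕ → ℂ) (Lil Lij Li Lj D : ℂ)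
    (hvsum : ∀ N, vjl N = vil N - vij N)
    (idil : ∀ N, ‖Zil N‖ ^ 2 * ‖cil N‖ * ‖vil N‖ ^ 3 = ε N ^ 12)
    (idjl : ∀ N, ‖Zjl N‖ ^ 2 * ‖cjl N‖ * ‖vjl N‖ ^ 3 = ε N ^ 12)
    (idij : ∀ N, ‖Zij N‖ ^ 2 * ‖cij N‖ * ‖vij N‖ ^ 3 = ε N ^ 12)
    (hZil : Tendsto Zil atTop (nhds Lil)) (hLil : Lil ≠ 0)
    (hZjl : Tendsto Zjl atTop (nhds 0))
    (hZij : Tendsto Zij atTop (nhds Lij)) (hLij : Lij ≠ 0)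
    (hcil : Tendsto cil atTop (nhds Li)) (hLi : Li ≠ 0)
    (hcjl : Tendsto cjl atTop (nhds Lj)) (hLj : Lj ≠ 0)
    (hcij : Tendsto cij atTop (nhds D)) : D = 0 := by
  have hε12 : ∀ N, (0:ℝ) < ε N ^ 12 := fun N => pow_pos (hε N) 12
  set a : ℕ → ℝ := fun N => ‖vil N‖ / ε N ^ 4 with ha_def
  set b : ℕ → ℝ := fun N => ‖vjl N‖ / ε N ^ 4 with hb_def
  set r : ℕ → ℝ := fun N => ‖vij N‖ / ε N ^ 4 with hr_def
  have ha0 : ∀ N, 0 ≤ a N := fun N => by positivity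
  have hb0 : ∀ N, 0 ≤ b N := fun N => by positivity
  have hr0 : ∀ N, 0 ≤ r N := fun N => by positivity
  have key : ∀ (Z c v : ℕ → ℂ),
      (∀ N, ‖Z N‖ ^ 2 * ‖c N‖ * ‖v N‖ ^ 3 = ε N ^ 12) →
      ∀ N, (‖Z N‖ ^ 2 * ‖c N‖) * (‖v N‖ / ε N ^ 4) ^ 3 = 1 := by
    intro Z c v hid N
    rw [div_pow, ← mul_div_assoc, div_eq_one_iff_eq (pow_ne_zero _ (pow_ne_zero _ (ne_of_gt (hε N))))]
    linear_combination hid N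
  have hPa := key Zil cil vil idil
  have hQb := key Zjl cjl vjl idjl
  have hRr := key Zij cij vij idij
  -- the bounded sequence a
  have hP : Tendsto (fun N => ‖Zil N‖ ^ 2 * ‖cil N‖) atTop
      (nhds (‖Lil‖ ^ 2 * ‖Li‖)) :=
    ((abs_tendsto hZil).pow 2).mul (abs_tendsto hcil)
  have hPpos : 0 < ‖Lil‖ ^ 2 * ‖Li‖ := by
    exact mul_pos (pow_pos (norm_pos_iff.mpr hLil) 2) (norm_pos_iff.mpr hLi)
  have ha3 : Tendsto (fun N => a N ^ 3) atTop (nhds ((‖Lil‖ ^ 2 * ‖Li‖)⁻¹)) := by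
    have heq : ∀ N, a N ^ 3 = (‖Zil N‖ ^ 2 * ‖cil N‖)⁻¹ :=
      fun N => eq_inv_of_mul_eq_one_right (hPa N)
    simp only [heq]
    exact hP.inv₀ (ne_of_gt hPpos)
  set C : ℝ := (‖Lil‖ ^ 2 * ‖Li‖)⁻¹ + 2 with hC_def
  have haC : ∀ᶠ N in atTop, a N ≤ C := by
    filter_upwards [ha3.eventually_le_const
      (by linarith : (‖Lil‖ ^ 2 * ‖Li‖)⁻¹ <
        (‖Lil‖ ^ 2 * ‖Li‖)⁻¹ + 1)] with N h3
    have := cube_le (a N) (ha0 N)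
    rw [hC_def]; linarith
  -- b tends to infinity
  have hQ : Tendsto (fun N => ‖Zjl N‖ ^ 2 * ‖cjl N‖) atTop (nhds 0) := by
    have := ((abs_tendsto hZjl).pow 2).mul (abs_tendsto hcjl)
    simpa using this
  have hQpos : ∀ N, 0 < ‖Zjl N‖ ^ 2 * ‖cjl N‖ := by
    intro N
    have h1 := hQb N
    have h0 : 0 ≤ ‖Zjl N‖ ^ 2 * ‖cjl N‖ := by positivity
    rcases h0.lt_or_eq with h | h
    · exact h
    · exfalso; rw [← h, zero_mul] at h1; exact zero_ne_one h1
  have hb3 : Tendsto (fun N => b N ^ 3) atTop atTop := by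
    have heq : ∀ N, b N ^ 3 = (‖Zjl N‖ ^ 2 * ‖cjl N‖)⁻¹ :=
      fun N => eq_inv_of_mul_eq_one_right (hQb N)
    simp only [heq]
    exact Filter.Tendsto.inv_tendsto_nhdsGT_zero (tendsto_nhdsWithin_of_tendsto_nhds_of_eventually_within _ hQ
      (Eventually.of_forall fun N => Set.mem_Ioi.mpr (hQpos N)))
  have hb : Tendsto b atTop atTop := tendsto_atTop_of_pow3 hb0 hb3
  -- r tends to infinity
  have hbar : ∀ N, b N ≤ a N + r N := by
    intro N
    have htri : ‖vjl N‖ ≤ ‖vil N‖ + ‖vij N‖ := by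
      calc ‖vjl N‖ = ‖vil N - vij N‖ := by rw [hvsum N]
        _ ≤ ‖vil N‖ + ‖vij N‖ := norm_sub_le _ _
        _ = ‖vil N‖ + ‖vij N‖ := by rfl
    have h4 : (0:ℝ) < ε N ^ 4 := pow_pos (hε N) 4
    rw [ha_def, hb_def, hr_def]
    rw [← add_div]
    exact (div_le_div_iff_of_pos_right h4).mpr htri
  have hr : Tendsto r atTop atTop := by
    apply tendsto_atTop_mono' atTop ?_ (tendsto_atTop_add_const_right atTop (-C) hb)
    filter_upwards [haC] with N hN
    have := hbar N
    linarith
  have hr3 : Tendsto (fun N => r N ^ 3) atTop atTop :=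
    (tendsto_pow_atTop three_ne_zero).comp hr
  have hfull : Tendsto (fun N => ‖Zij N‖ ^ 2 * r N ^ 3) atTop atTop := by
    apply Filter.Tendsto.pos_mul_atTop (pow_pos (norm_pos_iff.mpr hLij) 2)
      ((abs_tendsto hZij).pow 2) hr3
  have hcij0 : ∀ N, ‖cij N‖ = (‖Zij N‖ ^ 2 * r N ^ 3)⁻¹ := by
    intro N
    apply eq_inv_of_mul_eq_one_left
    linear_combination hRr N
  have hlim0 : Tendsto (fun N => ‖cij N‖) atTop (nhds 0) := by
    simp only [hcij0]
    exact hfull.inv_tendsto_atTop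
  have habsD := abs_tendsto hcij
  have : ‖D‖ = 0 := tendsto_nhds_unique habsD hlim0
  simpa using this


private lemma comp_sum {n : ℕ} {m : Fin n → ℂ} (S : SingularSeq n m) (Lz : Fin n → ℂ)
    (hLz : ∀ p, Tendsto (fun N => (S.eps N : ℂ) ^ 2 * S.z N p) atTop (nhds (Lz p)))
    (U : Finset (Fin n))
    (hU : ∀ p ∈ U, ∀ q, q ∉ U →
      Tendsto (fun N => (S.eps N : ℂ) ^ 2 * Zq (S.delta N) (S.z N) p q) atTop (nhds 0)) :
    ∑ p ∈ U, m p * Lz p = 0 := by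
  classical
  set F : ℕ → Fin n → Fin n → ℂ :=
    fun N p q => (m p * m q) * ((S.eps N : ℂ) ^ 2 * Zq (S.delta N) (S.z N) p q) with hF_def
  have hkey : ∀ N, ∑ p ∈ U, m p * ((S.eps N : ℂ) ^ 2 * S.z N p)
      = ∑ p ∈ U, ∑ q ∈ univ \ U, F N p q := by
    intro N
    have hterm : ∀ p ∈ U, m p * ((S.eps N : ℂ) ^ 2 * S.z N p) = ∑ q ∈ univ, F N p q := by
      intro p _
      rw [S.eq_z N p]
      rw [← Finset.sum_erase (univ) (f := fun q => F N p q)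
        (by simp [hF_def, Zq_self] : F N p p = 0)]
      rw [Finset.mul_sum, Finset.mul_sum]
      exact Finset.sum_congr rfl fun q _ => by rw [hF_def]; ring
    rw [Finset.sum_congr rfl hterm]
    have hsplit : ∀ p, ∑ q ∈ univ, F N p q
        = ∑ q ∈ univ \ U, F N p q + ∑ q ∈ U, F N p q :=
      fun p => (Finset.sum_sdiff (Finset.subset_univ U)).symm
    rw [Finset.sum_congr rfl (fun p _ => hsplit p), Finset.sum_add_distrib]
    have hzero : ∑ p ∈ U, ∑ q ∈ U, F N p q = 0 := by
      apply sum_antisym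
      intro p q
      rw [hF_def]
      simp only
      rw [Zq_antisymm (S.delta N) (S.delta_symm N) (S.z N) p q]
      ring
    rw [hzero, add_zero]
  -- limits
  have h1 : Tendsto (fun N => ∑ p ∈ U, m p * ((S.eps N : ℂ) ^ 2 * S.z N p)) atTop
      (nhds (∑ p ∈ U, m p * Lz p)) :=
    tendsto_finset_sum U fun p _ => (hLz p).const_mul (m p)
  have h2 : Tendsto (fun N => ∑ p ∈ U, ∑ q ∈ univ \ U, F N p q) atTop (nhds 0) := by
    have : Tendsto (fun N => ∑ p ∈ U, ∑ q ∈ univ \ U, F N p q) atTop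
        (nhds (∑ p ∈ U, ∑ q ∈ univ \ U, (0 : ℂ))) := by
      apply tendsto_finset_sum
      intro p hp
      apply tendsto_finset_sum
      intro q hq
      have hq' : q ∉ U := (Finset.mem_sdiff.mp hq).2
      have := (hU p hp q hq').const_mul (m p * m q)
      simpa [hF_def] using this
    simpa using this
  have h3 : Tendsto (fun N => ∑ p ∈ U, m p * ((S.eps N : ℂ) ^ 2 * S.z N p)) atTop (nhds 0) := by
    rw [show (fun N => ∑ p ∈ U, m p * ((S.eps N : ℂ) ^ 2 * S.z N p))
      = (fun N => ∑ p ∈ U, ∑ q ∈ univ \ U, F N p q) from funext hkey]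
    exact h2
  exact tendsto_nhds_unique h1 h3

private lemma abs_identity {n : ℕ} {m : Fin n → ℂ} (S : SingularSeq n m) (N : ℕ)
    (p q : Fin n) (hpq : p ≠ q) :
    ‖(S.eps N : ℂ) ^ 2 * Zq (S.delta N) (S.z N) p q‖ ^ 2 *
      ‖(S.eps N : ℂ) ^ 2 * S.z N p - (S.eps N : ℂ) ^ 2 * S.z N q‖ *
      ‖(S.eps N : ℂ) ^ 2 * S.w N p - (S.eps N : ℂ) ^ 2 * S.w N q‖ ^ 3
    = S.eps N ^ 12 := by
  have hnorm := S.normalize N p q hpq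
  have hC : ((S.eps N : ℂ) ^ 2 * Zq (S.delta N) (S.z N) p q) ^ 2 *
      ((S.eps N : ℂ) ^ 2 * S.z N p - (S.eps N : ℂ) ^ 2 * S.z N q) *
      ((S.eps N : ℂ) ^ 2 * S.w N p - (S.eps N : ℂ) ^ 2 * S.w N q) ^ 3
      = ((S.eps N : ℂ)) ^ 12 := by
    unfold Zq
    linear_combination (((S.eps N : ℂ)) ^ 12 *
      ((S.delta N p q ^ 2 * (S.z N q - S.z N p) * (S.w N q - S.w N p)) ^ 2 +
        (S.delta N p q ^ 2 * (S.z N q - S.z N p) * (S.w N q - S.w N p)) + 1)) * hnorm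
  have := congrArg (‖·‖) hC
  simpa [norm_mul, norm_pow, Complex.norm_real, Real.norm_eq_abs, abs_of_pos (S.eps_pos N)] using this

/-- The singular sequence with the roles of `z` and `w` exchanged. -/
noncomputable def SingularSeq.swap {n : ℕ} {m : Fin n → ℂ} (S : SingularSeq n m) :
    SingularSeq n m where
  z := S.w
  w := S.z
  delta := S.delta
  eps := S.eps
  eps_pos := S.eps_pos
  eps_lim := S.eps_lim
  delta_symm := S.delta_symm
  eq_z := S.eq_w
  eq_w := S.eq_z
  normalize := fun N k l h => by
    have h2 := S.normalize N k l h
    linear_combination h2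
  maxZ := S.maxW
  maxW := S.maxZ
  conv_z := S.conv_w
  conv_w := S.conv_z
  conv_Z := S.conv_W
  conv_W := S.conv_Z

private lemma IsZWMatrices.swap {n : ℕ} {m : Fin n → ℂ} {S : SingularSeq n m}
    {A B : Matrix (Fin n) (Fin n) ℕ} (h : IsZWMatrices S A B) :
    IsZWMatrices S.swap B A :=
  ⟨h.zeroOne_B, h.symm_B, h.zeroOne_A, h.symm_A, h.diag_B, h.off_B, h.diag_A, h.off_A⟩

private lemma key_lemma {n : ℕ} {m : Fin n → ℂ}
    (hm : ∀ I : Finset (Fin n), I.Nonempty → ∑ k ∈ I, m k ≠ 0)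
    (S : SingularSeq n m) (A B : Matrix (Fin n) (Fin n) ℕ)
    (hAB : IsZWMatrices S A B)
    (htr : Matrix.trace A = 3)
    (i j k l : Fin n) (hij : i ≠ j) (hik : i ≠ k) (hjk : j ≠ k)
    (hli : l ≠ i) (hlj : l ≠ j) (hlk : l ≠ k)
    (hAi : A i i = 1) (hAj : A j j = 1) (hAk : A k k = 1)
    (hAij : A i j = 1) (hAik : A i k = 1) (hAil : A i l = 1) :
    A j l + A k l ≠ 0 := by
  intro hsum
  have hjl0 : A j l = 0 := by omega
  have hkl0 : A k l = 0 := by omega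
  classical
  -- choose the limits
  choose Lz hLz using S.conv_z
  choose LZ hLZ using S.conv_Z
  -- translations of the matrix conditions
  have hoff0 : ∀ p q, p ≠ q → A p q = 0 →
      Tendsto (fun N => (S.eps N : ℂ) ^ 2 * Zq (S.delta N) (S.z N) p q) atTop (nhds 0) := by
    intro p q hpq h0
    by_contra hT
    have := (hAB.off_A p q hpq).mpr hT
    omega
  have hoff1 : ∀ p q (hpq : p ≠ q), A p q = 1 → LZ p q hpq ≠ 0 := by
    intro p q hpq h1 hL0
    exact ((hAB.off_A p q hpq).mp h1) (hL0 ▸ hLZ p q hpq)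
  have hdiag1 : ∀ p, A p p = 1 → Lz p ≠ 0 := by
    intro p h1 h0
    exact ((hAB.diag_A p).mp h1) (h0 ▸ hLz p)
  have hdiag0 : ∀ p, A p p = 0 → Lz p = 0 := by
    intro p h0
    have hT : Tendsto (fun N => (S.eps N : ℂ) ^ 2 * S.z N p) atTop (nhds 0) := by
      by_contra hT
      have := (hAB.diag_A p).mpr hT
      omega
    exact tendsto_nhds_unique (hLz p) hT
  -- from the trace hypothesis : all other diagonal entries vanish
  have htr' : ∀ p, p ≠ i → p ≠ j → p ≠ k → A p p = 0 := by
    intro p hpi hpj hpk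
    have hsum3 : ∑ q ∈ ({i, j, k} : Finset (Fin n)), A q q = 3 := by
      rw [Finset.sum_insert (by simp [hij, hik]), Finset.sum_insert (by simp [hjk]),
        Finset.sum_singleton, hAi, hAj, hAk]
      norm_num
    have huniv : ∑ q ∈ (univ : Finset (Fin n)), A q q = 3 := by
      simpa [Matrix.trace, Matrix.diag] using htr
    have hsplit := Finset.sum_sdiff (f := fun q => A q q)
      (Finset.subset_univ ({i, j, k} : Finset (Fin n)))
    beta_reduce at hsplit
    rw [hsum3, huniv] at hsplit
    have hrest : ∑ q ∈ univ \ ({i, j, k} : Finset (Fin n)), A q q = 0 := by omega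
    have hp : p ∈ univ \ ({i, j, k} : Finset (Fin n)) := by simp [hpi, hpj, hpk]
    exact Finset.sum_eq_zero_iff.mp hrest p hp
  have hAll : A l l = 0 := htr' l hli hlj hlk
  have hLl : Lz l = 0 := hdiag0 l hAll
  -- the connected component of i in the graph of A
  set Adj : Fin n → Fin n → Prop := fun p q => p ≠ q ∧ A p q = 1 with hAdj_def
  set U : Finset (Fin n) := univ.filter (Relation.ReflTransGen Adj i) with hU_def
  have hiU : i ∈ U := Finset.mem_filter.mpr ⟨Finset.mem_univ _, Relation.ReflTransGen.refl⟩
  have hstep : ∀ p q, p ∈ U → p ≠ q → A p q = 1 → q ∈ U := by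
    intro p q hp hpq h1
    exact Finset.mem_filter.mpr ⟨Finset.mem_univ _,
      Relation.ReflTransGen.tail (Finset.mem_filter.mp hp).2 ⟨hpq, h1⟩⟩
  have hjU : j ∈ U := hstep i j hiU hij hAij
  have hkU : k ∈ U := hstep i k hiU hik hAik
  have hclosed : ∀ p ∈ U, ∀ q, q ∉ U → A p q = 0 := by
    intro p hp q hq
    rcases hAB.zeroOne_A p q with h | h
    · exact h
    · exfalso
      apply hq
      refine hstep p q hp ?_ h
      rintro rfl
      exact hq hp
  -- sum of the limit equations over the component
  have hsum0 : ∑ p ∈ U, m p * Lz p = 0 := by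
    apply comp_sum S Lz hLz U
    intro p hp q hq
    exact hoff0 p q (fun h => hq (h ▸ hp)) (hclosed p hp q hq)
  have hsub : ({i, j, k} : Finset (Fin n)) ⊆ U := by
    intro p hp
    rcases Finset.mem_insert.mp hp with rfl | hp'
    · exact hiU
    rcases Finset.mem_insert.mp hp' with rfl | hp''
    · exact hjU
    · rw [Finset.mem_singleton.mp hp'']; exact hkU
  have hsum1 : ∑ p ∈ ({i, j, k} : Finset (Fin n)), m p * Lz p = 0 := by
    rw [Finset.sum_subset hsub ?_]
    · exact hsum0
    · intro p hpU hpnot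
      simp only [Finset.mem_insert, Finset.mem_singleton, not_or] at hpnot
      rw [hdiag0 p (htr' p hpnot.1 hpnot.2.1 hpnot.2.2), mul_zero]
  -- the analytic comparison : Lz i = Lz j and Lz i = Lz k
  have hil : i ≠ l := Ne.symm hli
  have hjl : j ≠ l := Ne.symm hlj
  have hkl : k ≠ l := Ne.symm hlk
  have hmain : ∀ p : Fin n, p ≠ i → p ≠ l → (hpl : p ≠ l) → (hip : i ≠ p) →
      A p p = 1 → A i p = 1 → A p l = 0 → Lz i - Lz p = 0 := by
    intro p hpi hpl1 hpl hip hApp hAip hApl0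
    apply limit_eq_aux S.eps S.eps_pos
      (fun N => (S.eps N : ℂ) ^ 2 * Zq (S.delta N) (S.z N) i l)
      (fun N => (S.eps N : ℂ) ^ 2 * Zq (S.delta N) (S.z N) p l)
      (fun N => (S.eps N : ℂ) ^ 2 * Zq (S.delta N) (S.z N) i p)
      (fun N => (S.eps N : ℂ) ^ 2 * S.w N i - (S.eps N : ℂ) ^ 2 * S.w N l)
      (fun N => (S.eps N : ℂ) ^ 2 * S.w N p - (S.eps N : ℂ) ^ 2 * S.w N l)
      (fun N => (S.eps N : ℂ) ^ 2 * S.w N i - (S.eps N : ℂ) ^ 2 * S.w N p)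
      (fun N => (S.eps N : ℂ) ^ 2 * S.z N i - (S.eps N : ℂ) ^ 2 * S.z N l)
      (fun N => (S.eps N : ℂ) ^ 2 * S.z N p - (S.eps N : ℂ) ^ 2 * S.z N l)
      (fun N => (S.eps N : ℂ) ^ 2 * S.z N i - (S.eps N : ℂ) ^ 2 * S.z N p)
      (LZ i l hil) (LZ i p hip) (Lz i - Lz l) (Lz p - Lz l) (Lz i - Lz p)
    · intro N; ring
    · intro N; exact abs_identity S N i l hil
    · intro N; exact abs_identity S N p l hpl
    · intro N; exact abs_identity S N i p hip
    · exact hLZ i l hil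
    · exact hoff1 i l hil hAil
    · exact hoff0 p l hpl hApl0
    · exact hLZ i p hip
    · exact hoff1 i p hip hAip
    · exact (hLz i).sub (hLz l)
    · rw [hLl, sub_zero]; exact hdiag1 i hAi
    · exact (hLz p).sub (hLz l)
    · rw [hLl, sub_zero]; exact hdiag1 p hApp
    · exact (hLz i).sub (hLz p)
  have hIJ : Lz j = Lz i :=
    (sub_eq_zero.mp (hmain j (Ne.symm hij) hjl hjl hij hAj hAij hjl0)).symm
  have hIK : Lz k = Lz i :=
    (sub_eq_zero.mp (hmain k (Ne.symm hik) hkl hkl hik hAk hAik hkl0)).symm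
  -- conclusion
  have hfin : ∑ p ∈ ({i, j, k} : Finset (Fin n)), m p * Lz p
      = (∑ p ∈ ({i, j, k} : Finset (Fin n)), m p) * Lz i := by
    rw [Finset.sum_insert (by simp [hij, hik]), Finset.sum_insert (by simp [hjk]),
      Finset.sum_singleton, Finset.sum_insert (by simp [hij, hik]),
      Finset.sum_insert (by simp [hjk]), Finset.sum_singleton, hIJ, hIK]
    ring
  rw [hfin] at hsum1
  rcases mul_eq_zero.mp hsum1 with h | h
  · exact hm ({i, j, k} : Finset (Fin n)) ⟨i, by simp⟩ h
  · exact hdiag1 i hAi h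


theorem rule_of_trace_three_matrices (n : ℕ) (hn : 2 ≤ n) (m : Fin n → ℂ)
    (hm : ∀ I : Finset (Fin n), I.Nonempty → ∑ k ∈ I, m k ≠ 0)
    (S : SingularSeq n m) (A B : Matrix (Fin n) (Fin n) ℕ)
    (hAB : IsZWMatrices S A B) :
    (Matrix.trace A = 3 →
      ∀ i j k l : Fin n, i ≠ j → i ≠ k → j ≠ k → l ≠ i → l ≠ j → l ≠ k →
        A i i = 1 → A j j = 1 → A k k = 1 →
        A i j = 1 → A i k = 1 → A i l = 1 → A j l + A k l ≠ 0) ∧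
    (Matrix.trace B = 3 →
      ∀ i j k l : Fin n, i ≠ j → i ≠ k → j ≠ k → l ≠ i → l ≠ j → l ≠ k →
        B i i = 1 → B j j = 1 → B k k = 1 →
        B i j = 1 → B i k = 1 → B i l = 1 → B j l + B k l ≠ 0) := by
  constructor
  · intro htr i j k l hij hik hjk hli hlj hlk hAi hAj hAk hAij hAik hAil
    exact key_lemma hm S A B hAB htr i j k l hij hik hjk hli hlj hlk hAi hAj hAk hAij hAik hAil
  · intro htr i j k l hij hik hjk hli hlj hlk hBi hBj hBk hBij hBik hBil
    exact key_lemma hm S.swap B A (IsZWMatrices.swap hAB) htr i j k l hij hik hjk hli hlj hlk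
      hBi hBj hBk hBij hBik hBil
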